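/- Let Ω_ℓ ⊆ ℝ^N be a convex open set and let u : ℝ^N → ℝ be continuously differentiable on Ω_ℓ with gradient in L²(Ω_ℓ). Let J : ℝ^N → ℝ be nonnegative and measurable with finite second moment M₂(J) = ∫ J(z)|z|² dz. Then ∫_{Ω_ℓ} ∫_{Ω_ℓ} J(x-y)(u(y)-u(x))² dy dx ≤ M₂(J) ∫_{Ω_ℓ} |∇u|². -/

import Mathlib

open MeasureTheory Real Set
open scoped ENNReal

section Aux

variable {N : ℕ}

local notation "E" => EuclideanSpace ℝ (Fin N)

/-- Jensen/Cauchy–Schwarz: the square of an integral over a probability measure is at most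
the integral of the square. -/
lemma jensen_sq {α : Type*} [MeasurableSpace α] {μ : Measure α} [IsProbabilityMeasure μ]
    {h : α → ℝ} (h1 : Integrable h μ) (h2 : Integrable (fun s => h s ^ 2) μ) :
    (∫ s, h s ∂μ) ^ 2 ≤ ∫ s, h s ^ 2 ∂μ := by
  set c := ∫ s, h s ∂μ with hc
  have hnn : 0 ≤ ∫ s, (h s - c) ^ 2 ∂μ := integral_nonneg fun s => sq_nonneg _
  have hexp : (fun s => (h s - c) ^ 2) = fun s => h s ^ 2 - (2 * c) * h s + c ^ 2 := by
    funext s; ring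
  rw [hexp] at hnn
  have hint1 : Integrable (fun s => h s ^ 2 - (2 * c) * h s) μ := h2.sub (h1.const_mul _)
  rw [integral_add hint1 (integrable_const _), integral_sub h2 (h1.const_mul _),
    integral_const_mul, integral_const, probReal_univ, one_smul, ← hc] at hnn
  nlinarith

/-- Translation/reflection invariance of the Lebesgue lintegral on `ℝ^N`. -/
lemma lint_sub_left (f : E → ℝ≥0∞) (a : E) : ∫⁻ z, f (a - z) = ∫⁻ z, f z := by
  have h1 : ∫⁻ z, (fun t => f (a + t)) (-z) = ∫⁻ z, f (a + z) := by
    have h := lintegral_map_equiv (μ := (volume : Measure E)) (fun t => f (a + t)) (MeasurableEquiv.neg E)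
    rw [show ⇑(MeasurableEquiv.neg E) = (Neg.neg : E → E) from rfl,
      Measure.map_neg_eq_self (volume : Measure E)] at h
    exact h.symm
  have h2 : ∫⁻ z, f (a + z) = ∫⁻ z, f z := lintegral_add_left_eq_self f a
  calc ∫⁻ z, f (a - z) = ∫⁻ z, (fun t => f (a + t)) (-z) := by
        simp only [sub_eq_add_neg]
    _ = ∫⁻ z, f (a + z) := h1
    _ = ∫⁻ z, f z := h2

/-- The gradient of any function is measurable. -/
lemma measurable_gradient (u : E → ℝ) : Measurable (gradient u) := by
  have : Measurable (fderiv ℝ u) := measurable_fderiv ℝ u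
  exact ((InnerProductSpace.toDual ℝ E).symm.continuous.measurable).comp this

/-- Key FTC + Jensen estimate along a segment inside the convex open set. -/
lemma key_segment {Ωl : Set E} (hconv : Convex ℝ Ωl) (hopen : IsOpen Ωl)
    {u : E → ℝ} (hu : ContDiffOn ℝ 1 u Ωl) {x y : E} (hx : x ∈ Ωl) (hy : y ∈ Ωl) :
    ENNReal.ofReal ((u y - u x) ^ 2) ≤ ENNReal.ofReal (‖y - x‖ ^ 2) *
      ∫⁻ s in Ioc (0:ℝ) 1, ENNReal.ofReal (‖gradient u (x + s • (y - x))‖ ^ 2) := by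
  set v := y - x with hv
  set c : ℝ → E := fun s => x + s • v with hcdef
  have hcs : ∀ s ∈ Icc (0:ℝ) 1, c s ∈ Ωl := fun s hs => hconv.add_smul_sub_mem hx hy hs
  have hdiff : ∀ s ∈ Icc (0:ℝ) 1, DifferentiableAt ℝ u (c s) := fun s hs =>
    (hu.contDiffAt (hopen.mem_nhds (hcs s hs))).differentiableAt one_ne_zero
  have hderiv : ∀ s ∈ Icc (0:ℝ) 1, HasDerivAt (fun t => u (c t)) (fderiv ℝ u (c s) v) s := by
    intro s hs
    have h1 : HasDerivAt c v s := by
      have h0 : HasDerivAt (fun t : ℝ => t • v) ((1:ℝ) • v) s := (hasDerivAt_id s).smul_const v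
      simpa [hcdef] using h0.const_add x
    exact ((hdiff s hs).hasFDerivAt.comp_hasDerivAt s h1)
  have hcc : Continuous c := by continuity
  have hcontf : ContinuousOn (fun s => fderiv ℝ u (c s)) (Icc (0:ℝ) 1) :=
    (hu.continuousOn_fderiv_of_isOpen hopen le_rfl).comp hcc.continuousOn
      (fun s hs => hcs s hs)
  have hcont : ContinuousOn (fun s => fderiv ℝ u (c s) v) (Icc (0:ℝ) 1) :=
    hcontf.clm_apply continuousOn_const
  have hint : IntervalIntegrable (fun s => fderiv ℝ u (c s) v) volume 0 1 :=
    hcont.intervalIntegrable_of_Icc zero_le_one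
  have hftc : ∫ s in (0:ℝ)..1, fderiv ℝ u (c s) v = u y - u x := by
    rw [intervalIntegral.integral_eq_sub_of_hasDerivAt
      (fun t ht => hderiv t (by rwa [uIcc_of_le zero_le_one] at ht)) hint]
    simp [hcdef, hv]
  have hIoc : ∫ s in Ioc (0:ℝ) 1, fderiv ℝ u (c s) v = u y - u x := by
    rw [← hftc, intervalIntegral.integral_of_le zero_le_one]
  haveI : IsProbabilityMeasure ((volume : Measure ℝ).restrict (Ioc 0 1)) := ⟨by simp⟩
  have h1 : IntegrableOn (fun s => fderiv ℝ u (c s) v) (Ioc (0:ℝ) 1) := hint.1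
  have hGc : ContinuousOn (fun s => ‖gradient u (c s)‖ ^ 2) (Icc (0:ℝ) 1) := by
    have : ContinuousOn (fun s => gradient u (c s)) (Icc (0:ℝ) 1) := by
      have : gradient u ∘ c = fun s => (InnerProductSpace.toDual ℝ E).symm (fderiv ℝ u (c s)) :=
        rfl
      exact ((InnerProductSpace.toDual ℝ E).symm.continuous.comp_continuousOn hcontf)
    exact (this.norm.pow 2)
  have h2 : IntegrableOn (fun s => (fderiv ℝ u (c s) v) ^ 2) (Ioc (0:ℝ) 1) :=
    ((hcont.pow 2).integrableOn_Icc).mono_set Ioc_subset_Icc_self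
  have hG2 : IntegrableOn (fun s => ‖gradient u (c s)‖ ^ 2) (Ioc (0:ℝ) 1) :=
    (hGc.integrableOn_Icc).mono_set Ioc_subset_Icc_self
  have hjensen : (u y - u x) ^ 2 ≤ ∫ s in Ioc (0:ℝ) 1, (fderiv ℝ u (c s) v) ^ 2 := by
    rw [← hIoc]
    exact jensen_sq h1 h2
  have hnormgrad : ∀ p : E, ‖gradient u p‖ = ‖fderiv ℝ u p‖ := fun p =>
    (InnerProductSpace.toDual ℝ E).symm.norm_map _
  have hCS : ∀ s : ℝ, (fderiv ℝ u (c s) v) ^ 2 ≤ ‖gradient u (c s)‖ ^ 2 * ‖v‖ ^ 2 := by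
    intro s
    have h := (fderiv ℝ u (c s)).le_opNorm v
    have habs : |fderiv ℝ u (c s) v| ≤ ‖fderiv ℝ u (c s)‖ * ‖v‖ := by
      simpa [Real.norm_eq_abs] using h
    calc (fderiv ℝ u (c s) v) ^ 2 = |fderiv ℝ u (c s) v| ^ 2 := (sq_abs _).symm
      _ ≤ (‖fderiv ℝ u (c s)‖ * ‖v‖) ^ 2 := by
          exact pow_le_pow_left₀ (abs_nonneg _) habs 2
      _ = ‖gradient u (c s)‖ ^ 2 * ‖v‖ ^ 2 := by rw [hnormgrad]; ring
  have hmono : ∫ s in Ioc (0:ℝ) 1, (fderiv ℝ u (c s) v) ^ 2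
      ≤ ∫ s in Ioc (0:ℝ) 1, ‖gradient u (c s)‖ ^ 2 * ‖v‖ ^ 2 :=
    integral_mono h2 (hG2.mul_const _) fun s => hCS s
  have hfinal : (u y - u x) ^ 2 ≤ ‖v‖ ^ 2 * ∫ s in Ioc (0:ℝ) 1, ‖gradient u (c s)‖ ^ 2 := by
    calc (u y - u x) ^ 2 ≤ ∫ s in Ioc (0:ℝ) 1, (fderiv ℝ u (c s) v) ^ 2 := hjensen
      _ ≤ ∫ s in Ioc (0:ℝ) 1, ‖gradient u (c s)‖ ^ 2 * ‖v‖ ^ 2 := hmono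
      _ = ‖v‖ ^ 2 * ∫ s in Ioc (0:ℝ) 1, ‖gradient u (c s)‖ ^ 2 := by
          rw [integral_mul_const, mul_comm]
  calc ENNReal.ofReal ((u y - u x) ^ 2)
      ≤ ENNReal.ofReal (‖v‖ ^ 2 * ∫ s in Ioc (0:ℝ) 1, ‖gradient u (c s)‖ ^ 2) :=
        ENNReal.ofReal_le_ofReal hfinal
    _ = ENNReal.ofReal (‖v‖ ^ 2) *
        ENNReal.ofReal (∫ s in Ioc (0:ℝ) 1, ‖gradient u (c s)‖ ^ 2) :=
        ENNReal.ofReal_mul (sq_nonneg _)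
    _ = ENNReal.ofReal (‖v‖ ^ 2) *
        ∫⁻ s in Ioc (0:ℝ) 1, ENNReal.ofReal (‖gradient u (c s)‖ ^ 2) := by
        rw [ofReal_integral_eq_lintegral_ofReal hG2 (ae_of_all _ fun s => sq_nonneg _)]
    _ = ENNReal.ofReal (‖y - x‖ ^ 2) *
        ∫⁻ s in Ioc (0:ℝ) 1, ENNReal.ofReal (‖gradient u (x + s • (y - x))‖ ^ 2) := rfl

end Aux

/-- If `Ωℓ ⊆ ℝ^N` is convex and open, `u` is `C¹` on `Ωℓ` with gradient in `L²(Ωℓ)`,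
and `J ≥ 0` is measurable with finite second moment `M₂(J) = ∫ J(z)‖z‖²`, then
`∫_{Ωℓ}∫_{Ωℓ} J(x-y)(u(y)-u(x))² dy dx ≤ M₂(J) ∫_{Ωℓ} ‖∇u‖²`. -/
theorem stmt_1 (N : ℕ) (Ωl : Set (EuclideanSpace ℝ (Fin N)))
    (hconv : Convex ℝ Ωl) (hopen : IsOpen Ωl)
    (u : EuclideanSpace ℝ (Fin N) → ℝ) (hu : ContDiffOn ℝ 1 u Ωl)
    (hgrad : IntegrableOn (fun x => ‖gradient u x‖ ^ 2) Ωl)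
    (J : EuclideanSpace ℝ (Fin N) → ℝ) (hJ0 : ∀ z, 0 ≤ J z) (hJm : Measurable J)
    (hM2 : Integrable (fun z => J z * ‖z‖ ^ 2)) :
    ∫ x in Ωl, ∫ y in Ωl, J (x - y) * (u y - u x) ^ 2
      ≤ (∫ z, J z * ‖z‖ ^ 2) * ∫ x in Ωl, ‖gradient u x‖ ^ 2 := by
  classical
  have hmΩ : MeasurableSet Ωl := hopen.measurableSet
  set G : EuclideanSpace ℝ (Fin N) → ℝ≥0∞ :=
    fun p => ENNReal.ofReal (‖gradient u p‖ ^ 2) with hGdef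
  have hGm : Measurable G := (((measurable_gradient u).norm).pow_const 2).ennreal_ofReal
  set K : EuclideanSpace ℝ (Fin N) → ℝ≥0∞ :=
    fun z => ENNReal.ofReal (J z * ‖z‖ ^ 2) with hKdef
  have hKm : Measurable K := (hJm.mul ((measurable_norm).pow_const 2)).ennreal_ofReal
  have hKtop : ∀ z, K z ≠ ⊤ := fun z => ENNReal.ofReal_ne_top
  set ut : EuclideanSpace ℝ (Fin N) → ℝ := Ωl.piecewise u (fun _ => 0) with hutdef
  have hutm : Measurable ut :=
    ContinuousOn.measurable_piecewise hu.continuousOn continuousOn_const hmΩ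
  have hut_eq : ∀ p ∈ Ωl, ut p = u p := fun p hp => Set.piecewise_eq_of_mem _ _ _ hp
  set F : EuclideanSpace ℝ (Fin N) × EuclideanSpace ℝ (Fin N) → ℝ≥0∞ :=
    fun p => ENNReal.ofReal (J (p.1 - p.2) * (ut p.2 - ut p.1) ^ 2) with hFdef
  have hFm : Measurable F := by
    apply Measurable.ennreal_ofReal
    exact (hJm.comp (measurable_fst.sub measurable_snd)).mul
      (((hutm.comp measurable_snd).sub (hutm.comp measurable_fst)).pow_const 2)
  set H : EuclideanSpace ℝ (Fin N) → ℝ≥0∞ :=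
    fun x => ∫⁻ y in Ωl, F (x, y) with hHdef
  have hHm : Measurable H := hFm.lintegral_prod_right'
  -- The inner Bochner integral equals the toReal of the inner lintegral on `Ωl`.
  have hΦ : ∀ x ∈ Ωl, ∫ y in Ωl, J (x - y) * (u y - u x) ^ 2 = (H x).toReal := by
    intro x hx
    have hcong : EqOn (fun y => J (x - y) * (u y - u x) ^ 2)
        (fun y => J (x - y) * (ut y - ut x) ^ 2) Ωl := by
      intro y hy; simp only [hut_eq y hy, hut_eq x hx]
    rw [setIntegral_congr_fun hmΩ hcong]
    have hnn : 0 ≤ᵐ[(volume : Measure (EuclideanSpace ℝ (Fin N))).restrict Ωl]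
        fun y => J (x - y) * (ut y - ut x) ^ 2 :=
      ae_of_all _ fun y => mul_nonneg (hJ0 _) (sq_nonneg _)
    have hsm : AEStronglyMeasurable (fun y => J (x - y) * (ut y - ut x) ^ 2)
        ((volume : Measure (EuclideanSpace ℝ (Fin N))).restrict Ωl) := by
      apply Measurable.aestronglyMeasurable
      exact (hJm.comp (measurable_const.sub measurable_id)).mul
        ((hutm.sub measurable_const).pow_const 2)
    rw [integral_eq_lintegral_of_nonneg_ae hnn hsm]
  -- The key pointwise bound.
  have hkey : ∀ x ∈ Ωl, ∀ y ∈ Ωl,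
      F (x, y) ≤ K (x - y) * ∫⁻ s in Ioc (0:ℝ) 1, G (x + s • (y - x)) := by
    intro x hx y hy
    have h1 : F (x, y) = ENNReal.ofReal (J (x - y)) * ENNReal.ofReal ((u y - u x) ^ 2) := by
      rw [hFdef]; dsimp only
      rw [hut_eq y hy, hut_eq x hx, ENNReal.ofReal_mul (hJ0 _)]
    have h2 := key_segment hconv hopen hu hx hy
    have h3 : K (x - y) = ENNReal.ofReal (J (x - y)) * ENNReal.ofReal (‖y - x‖ ^ 2) := by
      rw [hKdef]; dsimp only
      rw [ENNReal.ofReal_mul (hJ0 _), norm_sub_rev]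
    rw [h1, h3, mul_assoc]
    exact mul_le_mul_right h2 _
  -- measurability helpers
  have hGsm : ∀ x y : EuclideanSpace ℝ (Fin N), Measurable fun s : ℝ => G (x + s • (y - x)) :=
    fun x y => hGm.comp (continuous_const.add ((continuous_id.smul continuous_const))).measurable
  have hjm1 : ∀ x : EuclideanSpace ℝ (Fin N),
      Measurable fun p : EuclideanSpace ℝ (Fin N) × ℝ =>
        K (x - p.1) * G (x + p.2 • (p.1 - x)) := fun x =>
    (hKm.comp (measurable_const.sub measurable_fst)).mul
      (hGm.comp (continuous_const.add
        (continuous_snd.smul (continuous_fst.sub continuous_const))).measurable)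
  -- Step 1: bound the double lintegral by the kernel estimate.
  have hstep1 : ∫⁻ x in Ωl, H x ≤ ∫⁻ x in Ωl, ∫⁻ y in Ωl,
      K (x - y) * ∫⁻ s in Ioc (0:ℝ) 1, G (x + s • (y - x)) := by
    refine lintegral_mono_ae ((ae_restrict_iff' hmΩ).2 (ae_of_all _ fun x hx => ?_))
    exact lintegral_mono_ae ((ae_restrict_iff' hmΩ).2 (ae_of_all _ fun y hy => hkey x hx y hy))
  -- Step 2a: for each x, pull the constant inside and swap y and s.
  have hswap1 : ∀ x : EuclideanSpace ℝ (Fin N),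
      (∫⁻ y in Ωl, K (x - y) * ∫⁻ s in Ioc (0:ℝ) 1, G (x + s • (y - x)))
        = ∫⁻ s in Ioc (0:ℝ) 1, ∫⁻ y in Ωl, K (x - y) * G (x + s • (y - x)) := by
    intro x
    have h1 : ∀ y : EuclideanSpace ℝ (Fin N),
        K (x - y) * (∫⁻ s in Ioc (0:ℝ) 1, G (x + s • (y - x)))
        = ∫⁻ s in Ioc (0:ℝ) 1, K (x - y) * G (x + s • (y - x)) :=
      fun y => (lintegral_const_mul _ (hGsm x y)).symm
    simp_rw [h1]
    exact lintegral_lintegral_swap (hjm1 x).aemeasurable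
  -- Step 2b: swap x and s.
  have hjm2 : Measurable (Function.uncurry fun (x : EuclideanSpace ℝ (Fin N)) (s : ℝ) =>
      ∫⁻ y in Ωl, K (x - y) * G (x + s • (y - x))) := by
    have : Measurable fun q : (EuclideanSpace ℝ (Fin N) × ℝ) × EuclideanSpace ℝ (Fin N) =>
        K (q.1.1 - q.2) * G (q.1.1 + q.1.2 • (q.2 - q.1.1)) :=
      (hKm.comp ((measurable_fst.comp measurable_fst).sub measurable_snd)).mul
        (hGm.comp (((continuous_fst.comp continuous_fst).add
          ((continuous_snd.comp continuous_fst).smul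
            (continuous_snd.sub (continuous_fst.comp continuous_fst)))).measurable))
    exact this.lintegral_prod_right'
  have hswap2 : ∫⁻ x in Ωl, ∫⁻ s in Ioc (0:ℝ) 1, ∫⁻ y in Ωl,
        K (x - y) * G (x + s • (y - x))
      = ∫⁻ s in Ioc (0:ℝ) 1, ∫⁻ x in Ωl, ∫⁻ y in Ωl,
        K (x - y) * G (x + s • (y - x)) :=
    lintegral_lintegral_swap hjm2.aemeasurable
  -- Step 3: for each s ∈ (0,1], change variables and use convexity + translation invariance.
  have hstep3 : ∀ s ∈ Ioc (0:ℝ) 1,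
      (∫⁻ x in Ωl, ∫⁻ y in Ωl, K (x - y) * G (x + s • (y - x)))
        ≤ (∫⁻ z, K z) * ∫⁻ p in Ωl, G p := by
    intro s hs
    have hs01 : s ∈ Icc (0:ℝ) 1 := Ioc_subset_Icc_self hs
    have hsub : ∀ x : EuclideanSpace ℝ (Fin N),
        (∫⁻ y in Ωl, K (x - y) * G (x + s • (y - x)))
        = ∫⁻ z, Ωl.indicator (fun y => K (x - y) * G (x + s • (y - x))) (x - z) := by
      intro x
      rw [← lintegral_indicator hmΩ]
      exact (lint_sub_left (Ωl.indicator fun y => K (x - y) * G (x + s • (y - x))) x).symm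
    have hptw : ∀ x z : EuclideanSpace ℝ (Fin N),
        Ωl.indicator (fun y => K (x - y) * G (x + s • (y - x))) (x - z)
        = Ωl.indicator (fun _ => (1:ℝ≥0∞)) (x - z) * (K z * G (x - s • z)) := by
      intro x z
      by_cases h : x - z ∈ Ωl
      · have e1 : x - (x - z) = z := by abel
        have e2 : x + s • (x - z - x) = x - s • z := by module
        rw [Set.indicator_of_mem h, Set.indicator_of_mem h, e1, e2, one_mul]
      · rw [Set.indicator_of_notMem h, Set.indicator_of_notMem h, zero_mul]
    calc ∫⁻ x in Ωl, ∫⁻ y in Ωl, K (x - y) * G (x + s • (y - x))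
        = ∫⁻ x in Ωl, ∫⁻ z, Ωl.indicator (fun _ => (1:ℝ≥0∞)) (x - z) * (K z * G (x - s • z)) := by
          refine lintegral_congr fun x => ?_
          rw [hsub x]
          exact lintegral_congr fun z => hptw x z
      _ = ∫⁻ z, ∫⁻ x in Ωl, Ωl.indicator (fun _ => (1:ℝ≥0∞)) (x - z) * (K z * G (x - s • z)) := by
          refine lintegral_lintegral_swap ?_
          have hind : Measurable (Ωl.indicator (fun _ => (1:ℝ≥0∞))) :=
            measurable_const.indicator hmΩ
          exact (((hind.comp (measurable_fst.sub measurable_snd)).mul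
            ((hKm.comp measurable_snd).mul
              (hGm.comp (measurable_fst.sub (measurable_snd.const_smul s)))))).aemeasurable
      _ ≤ ∫⁻ z, K z * ∫⁻ p in Ωl, G p := by
          refine lintegral_mono fun z => ?_
          have h1 : (∫⁻ x in Ωl, Ωl.indicator (fun _ => (1:ℝ≥0∞)) (x - z) * (K z * G (x - s • z)))
              = K z * ∫⁻ x in Ωl, Ωl.indicator (fun _ => (1:ℝ≥0∞)) (x - z) * G (x - s • z) := by
            rw [← lintegral_const_mul' (K z) _ (hKtop z)]
            exact lintegral_congr fun x => by ring
          rw [h1]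
          refine mul_le_mul_right ?_ _
          calc ∫⁻ x in Ωl, Ωl.indicator (fun _ => (1:ℝ≥0∞)) (x - z) * G (x - s • z)
              = ∫⁻ x, Ωl.indicator
                  (fun x => Ωl.indicator (fun _ => (1:ℝ≥0∞)) (x - z) * G (x - s • z)) x :=
                (lintegral_indicator hmΩ _).symm
            _ ≤ ∫⁻ x, Ωl.indicator (fun _ => (1:ℝ≥0∞)) (x - s • z) * G (x - s • z) := by
                refine lintegral_mono fun x => ?_
                by_cases hx : x ∈ Ωl
                · rw [Set.indicator_of_mem hx]
                  by_cases hxz : x - z ∈ Ωl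
                  · rw [Set.indicator_of_mem hxz, one_mul]
                    have hmem : x - s • z ∈ Ωl := by
                      have hm := hconv.add_smul_sub_mem hx hxz hs01
                      have e : x + s • (x - z - x) = x - s • z := by module
                      rwa [e] at hm
                    rw [Set.indicator_of_mem hmem, one_mul]
                  · rw [Set.indicator_of_notMem hxz, zero_mul]
                    exact zero_le
                · rw [Set.indicator_of_notMem hx]
                  exact zero_le
            _ = ∫⁻ x, Ωl.indicator (fun _ => (1:ℝ≥0∞)) x * G x :=
                lintegral_sub_right_eq_self
                  (fun w => Ωl.indicator (fun _ => (1:ℝ≥0∞)) w * G w) (s • z)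
            _ = ∫⁻ p in Ωl, G p := by
                rw [← lintegral_indicator hmΩ]
                refine lintegral_congr fun x => ?_
                by_cases hx : x ∈ Ωl <;> simp [hx]
      _ = (∫⁻ z, K z) * ∫⁻ p in Ωl, G p := lintegral_mul_const _ hKm
  -- Put everything together at the lintegral level.
  have hM2nn : 0 ≤ ∫ z, J z * ‖z‖ ^ 2 :=
    integral_nonneg fun z => mul_nonneg (hJ0 z) (sq_nonneg _)
  have hA : ∫⁻ x in Ωl, H x
      ≤ ENNReal.ofReal ((∫ z, J z * ‖z‖ ^ 2) * ∫ x in Ωl, ‖gradient u x‖ ^ 2) := by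
    have hKint : ∫⁻ z, K z = ENNReal.ofReal (∫ z, J z * ‖z‖ ^ 2) :=
      (ofReal_integral_eq_lintegral_ofReal hM2
        (ae_of_all _ fun z => mul_nonneg (hJ0 z) (sq_nonneg _))).symm
    have hGint : ∫⁻ p in Ωl, G p = ENNReal.ofReal (∫ x in Ωl, ‖gradient u x‖ ^ 2) :=
      (ofReal_integral_eq_lintegral_ofReal hgrad (ae_of_all _ fun p => sq_nonneg _)).symm
    calc ∫⁻ x in Ωl, H x
        ≤ ∫⁻ x in Ωl, ∫⁻ y in Ωl, K (x - y) * ∫⁻ s in Ioc (0:ℝ) 1, G (x + s • (y - x)) :=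
          hstep1
      _ = ∫⁻ x in Ωl, ∫⁻ s in Ioc (0:ℝ) 1, ∫⁻ y in Ωl, K (x - y) * G (x + s • (y - x)) :=
          lintegral_congr fun x => hswap1 x
      _ = ∫⁻ s in Ioc (0:ℝ) 1, ∫⁻ x in Ωl, ∫⁻ y in Ωl, K (x - y) * G (x + s • (y - x)) :=
          hswap2
      _ ≤ ∫⁻ _ in Ioc (0:ℝ) 1, ((∫⁻ z, K z) * ∫⁻ p in Ωl, G p) :=
          lintegral_mono_ae ((ae_restrict_iff' measurableSet_Ioc).2
            (ae_of_all _ fun s hs => hstep3 s hs))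
      _ = (∫⁻ z, K z) * ∫⁻ p in Ωl, G p := by
          rw [setLIntegral_const, Real.volume_Ioc]
          norm_num
      _ = ENNReal.ofReal (∫ z, J z * ‖z‖ ^ 2)
            * ENNReal.ofReal (∫ x in Ωl, ‖gradient u x‖ ^ 2) := by rw [hKint, hGint]
      _ = ENNReal.ofReal ((∫ z, J z * ‖z‖ ^ 2) * ∫ x in Ωl, ‖gradient u x‖ ^ 2) :=
          (ENNReal.ofReal_mul hM2nn).symm
  have hRHS0 : 0 ≤ (∫ z, J z * ‖z‖ ^ 2) * ∫ x in Ωl, ‖gradient u x‖ ^ 2 :=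
    mul_nonneg hM2nn (integral_nonneg fun x => sq_nonneg _)
  have hAne : ∫⁻ x in Ωl, H x ≠ ⊤ := (lt_of_le_of_lt hA ENNReal.ofReal_lt_top).ne
  have hLHS : ∫ x in Ωl, ∫ y in Ωl, J (x - y) * (u y - u x) ^ 2
      = (∫⁻ x in Ωl, H x).toReal := by
    rw [setIntegral_congr_fun hmΩ (fun x hx => hΦ x hx)]
    exact integral_toReal hHm.aemeasurable (ae_lt_top hHm hAne)
  rw [hLHS]
  calc (∫⁻ x in Ωl, H x).toReal
      ≤ (ENNReal.ofReal ((∫ z, J z * ‖z‖ ^ 2) * ∫ x in Ωl, ‖gradient u x‖ ^ 2)).toReal :=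
        ENNReal.toReal_mono ENNReal.ofReal_ne_top hA
    _ = (∫ z, J z * ‖z‖ ^ 2) * ∫ x in Ωl, ‖gradient u x‖ ^ 2 :=
        ENNReal.toReal_ofReal hRHS0
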